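/- Let u ≤_k w and u' ≤_{k'} w' in S∞ with w·u⁻¹ = w'·(u')⁻¹. Then the map v ↦ v·u⁻¹·u' is an isomorphism of partially ordered sets from the interval [u, w]_k = {v : u ≤_k v ≤_k w} in the k-Bruhat order onto the interval [u', w']_{k'} in the k'-Bruhat order. -/

import Mathlib

/-
Common definitions for "A Monoid for the universal k-Bruhat order"
(Bergeron–Sottile).

`S∞` is modeled as `Equiv.Perm ℕ+`; membership in `S∞` (finite support)
is the predicate `FinSupp`.
-/

noncomputable section

open scoped Classical

/-- `S∞`: permutations of the positive integers `{1,2,3,...}`. -/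
abbrev Sinf : Type := Equiv.Perm ℕ+

/-- A permutation belongs to `S∞` iff it moves only finitely many points. -/
def FinSupp (w : Sinf) : Prop := {i : ℕ+ | w i ≠ i}.Finite

/-- `ℓ(w)`: the number of inversions, i.e. pairs `i < j` with `w i > w j`. -/
def len (w : Sinf) : ℕ := {p : ℕ+ × ℕ+ | p.1 < p.2 ∧ w p.2 < w p.1}.ncard

/-- The cover relation of the `k`-Bruhat order: `w` covers `u` iff
`ℓ(w) = ℓ(u) + 1` and `w = u·(a b)` for some `a ≤ k < b`. -/
def kCover (k : ℕ+) (u w : Sinf) : Prop :=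
  len w = len u + 1 ∧ ∃ a b : ℕ+, a ≤ k ∧ k < b ∧ w = u * Equiv.swap a b

/-- The `k`-Bruhat order `≤ₖ`: the partial order generated by `kCover`. -/
def kBruhat (k : ℕ+) : Sinf → Sinf → Prop := Relation.ReflTransGen (kCover k)

/-- `ℓᵤ(ζ) = ℓ(ζu) − ℓ(u)` for any (some chosen) `u ∈ S∞`, `k` with `u ≤ₖ ζu`. -/
def ellU (ζ : Sinf) : ℕ :=
  if h : ∃ p : Sinf × ℕ+, FinSupp p.1 ∧ kBruhat p.2 p.1 (ζ * p.1) then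
    len (ζ * h.choose.1) - len h.choose.1
  else 0

/-- `ℚ[S∞]` as a `ℚ`-vector space with basis the permutations. -/
abbrev QS : Type := Sinf →₀ ℚ

/-- The operator `û_{αβ}` on `ℚ[S∞]`: on a basis permutation `ζ` it gives
`(α β)·ζ` if `ℓᵤ((α β)ζ) = ℓᵤ(ζ) + 1`, and `0` otherwise. -/
def uhat (α β : ℕ+) : QS →ₗ[ℚ] QS :=
  Finsupp.lsum ℚ (fun ζ : Sinf =>
    LinearMap.toSpanSingleton ℚ QS
      (if ellU (Equiv.swap α β * ζ) = ellU ζ + 1 then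
        Finsupp.single (Equiv.swap α β * ζ) (1 : ℚ)
      else 0))

/-- Index type for the generators `u_{αβ}`, `0 < α < β`. -/
abbrev Gen : Type := {p : ℕ+ × ℕ+ // p.1 < p.2}

/-- For `L = [(α₁,β₁),…,(αₙ,βₙ)]`, the composition `û_{αₙβₙ}∘⋯∘û_{α₁β₁}`
(the operator `û_{α₁β₁}` acts first). -/
def wordOp (L : List Gen) : QS →ₗ[ℚ] QS :=
  L.foldl (fun f p => (uhat p.val.1 p.val.2).comp f) LinearMap.id

/-- The universal `k`-Bruhat order `≼`. -/
def uBruhat (η ζ : Sinf) : Prop :=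
  ∃ u : Sinf, FinSupp u ∧ ∃ k : ℕ+, kBruhat k u (η * u) ∧ kBruhat k (η * u) (ζ * u)

/-- `ζ` covers `η` in `≼`. -/
def uCover (η ζ : Sinf) : Prop :=
  uBruhat η ζ ∧ η ≠ ζ ∧ ∀ ξ : Sinf, uBruhat η ξ → uBruhat ξ ζ → ξ = η ∨ ξ = ζ

/-- `up(ζ) = {j : ζ⁻¹(j) < j}`. -/
def upS (ζ : Sinf) : Set ℕ+ := {j | ζ⁻¹ j < j}

/-- `dw(ζ) = {j : ζ⁻¹(j) > j}`. -/
def dwS (ζ : Sinf) : Set ℕ+ := {j | j < ζ⁻¹ j}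

/-- `R_u(ζ)`: the `u`-reduced sequences for `ζ`, i.e. sequences
`((α₁,β₁),…,(αₙ,βₙ))` with `û_{αₙβₙ}∘⋯∘û_{α₁β₁}(1) = ζ`. -/
def Rset (ζ : Sinf) : Set (List Gen) :=
  {L | wordOp L (Finsupp.single 1 1) = Finsupp.single ζ 1}

/-- `H_p(ζ)`: empty if some `pᵢ < 0`; otherwise those `u`-reduced sequences for `ζ`
whose `α`'s strictly increase within each consecutive block of sizes `p₁,…,p_r`
(indices `i, i+1` lie in the same block iff `i+1` is not a partial sum of `p`). -/
def Hset (p : List ℤ) (ζ : Sinf) : Set (List Gen) :=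
  {L | L ∈ Rset ζ ∧ (∀ x ∈ p, 0 ≤ x) ∧
    ∀ (i : ℕ) (q r : Gen), L[i]? = some q → L[i + 1]? = some r →
      (∀ t : ℕ, (p.take t).sum ≠ (i : ℤ) + 1) → q.val.1 < r.val.1}

/-- `E_p(ζ)`: as `H_p(ζ)` but with the `α`'s strictly decreasing in each block. -/
def Eset (p : List ℤ) (ζ : Sinf) : Set (List Gen) :=
  {L | L ∈ Rset ζ ∧ (∀ x ∈ p, 0 ≤ x) ∧
    ∀ (i : ℕ) (q r : Gen), L[i]? = some q → L[i + 1]? = some r →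
      (∀ t : ℕ, (p.take t).sum ≠ (i : ℤ) + 1) → r.val.1 < q.val.1}

/-- `E'_p(ζ)`: as `H_p(ζ)` but with the `β`'s strictly decreasing in each block. -/
def E'set (p : List ℤ) (ζ : Sinf) : Set (List Gen) :=
  {L | L ∈ Rset ζ ∧ (∀ x ∈ p, 0 ≤ x) ∧
    ∀ (i : ℕ) (q r : Gen), L[i]? = some q → L[i + 1]? = some r →
      (∀ t : ℕ, (p.take t).sum ≠ (i : ℤ) + 1) → r.val.2 < q.val.2}

/-- The integer sequence `λ_σ = (λ_{σ(i)} + i − σ(i))ᵢ` (here `0`-indexed). -/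
def lamSeq (r : ℕ) (lam : Fin r → ℕ) (σ : Equiv.Perm (Fin r)) : List ℤ :=
  (List.finRange r).map (fun i => (lam (σ i) : ℤ) + (i : ℤ) - ((σ i : ℕ) : ℤ))

/-- `c_λ^ζ := Σ_{σ ∈ S_r} ε(σ)·|H_{λ_σ}(ζ)|`. -/
def cCoef (r : ℕ) (lam : Fin r → ℕ) (ζ : Sinf) : ℤ :=
  ∑ σ : Equiv.Perm (Fin r),
    ((Equiv.Perm.sign σ : ℤˣ) : ℤ) * ((Hset (lamSeq r lam σ) ζ).ncard : ℤ)

/-- The free monoid-with-zero on the generators `u_{αβ}`. -/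
abbrev FM : Type := WithZero (FreeMonoid Gen)

/-- The generator `u_{αβ}` as an element of `FM`. -/
def g (α β : ℕ+) (h : α < β) : FM :=
  ((FreeMonoid.of (⟨(α, β), h⟩ : Gen) : FreeMonoid Gen) : FM)

/-- The defining relations (1)–(5) of the monoid `M`. -/
inductive MRel : FM → FM → Prop
  | r1 (α β γ δ : ℕ+) (h1 : α < β) (h2 : β < γ) (h3 : γ < δ) :
      MRel (g β γ h2 * g γ δ h3 * g α γ (h1.trans h2))
           (g β δ (h2.trans h3) * g α β h1 * g β γ h2)
  | r2 (α β γ δ : ℕ+) (h1 : α < β) (h2 : β < γ) (h3 : γ < δ) :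
      MRel (g α γ (h1.trans h2) * g γ δ h3 * g β γ h2)
           (g β γ h2 * g α β h1 * g β δ (h2.trans h3))
  | r3a (α β γ δ : ℕ+) (h1 : α < β) (h2 : γ < δ) (h : β < γ) :
      MRel (g α β h1 * g γ δ h2) (g γ δ h2 * g α β h1)
  | r3b (α β γ δ : ℕ+) (h1 : α < β) (h2 : γ < δ) (h3 : α < γ) (h4 : δ < β) :
      MRel (g α β h1 * g γ δ h2) (g γ δ h2 * g α β h1)
  | r4a (α β γ δ : ℕ+) (h1 : α ≤ β) (h2 : β < γ) (h3 : γ ≤ δ) :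
      MRel (g α γ (h1.trans_lt h2) * g β δ (h2.trans_le h3)) 0
  | r4b (α β γ δ : ℕ+) (h1 : α ≤ β) (h2 : β < γ) (h3 : γ ≤ δ) :
      MRel (g β δ (h2.trans_le h3) * g α γ (h1.trans_lt h2)) 0
  | r5a (α β γ : ℕ+) (h1 : α < β) (h2 : β < γ) :
      MRel (g β γ h2 * g α β h1 * g β γ h2) 0
  | r5b (α β γ : ℕ+) (h1 : α < β) (h2 : β < γ) :
      MRel (g α β h1 * g β γ h2 * g α β h1) 0

/-- The congruence generated by the relations (1)–(5); the monoid `M` is its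
quotient `MCon.Quotient`. -/
def MCon : Con FM := conGen MRel

/-- The word `u_{αₙβₙ}⋯u_{α₁β₁} ∈ FM` for `L = [(α₁,β₁),…,(αₙ,βₙ)]`. -/
def wordFM (L : List Gen) : FM :=
  ((FreeMonoid.ofList L.reverse : FreeMonoid Gen) : FM)

/-- The generator `u_{αβ}` in the free monoid (no zero). -/
def g3 (α β : ℕ+) (h : α < β) : FreeMonoid Gen := FreeMonoid.of ⟨(α, β), h⟩

/-- The relations (1)–(3) only, on the free monoid (no zero). -/
inductive MRel3 : FreeMonoid Gen → FreeMonoid Gen → Prop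
  | r1 (α β γ δ : ℕ+) (h1 : α < β) (h2 : β < γ) (h3 : γ < δ) :
      MRel3 (g3 β γ h2 * g3 γ δ h3 * g3 α γ (h1.trans h2))
            (g3 β δ (h2.trans h3) * g3 α β h1 * g3 β γ h2)
  | r2 (α β γ δ : ℕ+) (h1 : α < β) (h2 : β < γ) (h3 : γ < δ) :
      MRel3 (g3 α γ (h1.trans h2) * g3 γ δ h3 * g3 β γ h2)
            (g3 β γ h2 * g3 α β h1 * g3 β δ (h2.trans h3))
  | r3a (α β γ δ : ℕ+) (h1 : α < β) (h2 : γ < δ) (h : β < γ) :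
      MRel3 (g3 α β h1 * g3 γ δ h2) (g3 γ δ h2 * g3 α β h1)
  | r3b (α β γ δ : ℕ+) (h1 : α < β) (h2 : γ < δ) (h3 : α < γ) (h4 : δ < β) :
      MRel3 (g3 α β h1 * g3 γ δ h2) (g3 γ δ h2 * g3 α β h1)

/-- The word (with letters `(αᵢ,βᵢ)`) encoding a maximal chain of `[u,w]ₖ`:
there are permutations `u = u₀ <ₖ u₁ <ₖ ⋯ <ₖ uₙ = w` (each step a `k`-Bruhat
cover) with `uᵢ₊₁ = (αᵢ₊₁ βᵢ₊₁)·uᵢ`. -/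
def IsChainWord (k : ℕ+) (u w : Sinf) (L : List Gen) : Prop :=
  ∃ c : ℕ → Sinf, c 0 = u ∧ c L.length = w ∧
    ∀ (i : ℕ) (q : Gen), L[i]? = some q →
      kCover k (c i) (c (i + 1)) ∧ c (i + 1) = Equiv.swap q.val.1 q.val.2 * c i

/-- For an order-preserving `f`, the induced map on generators
`(α,β) ↦ (f α, f β)`. -/
def genMap (f : ℕ+ → ℕ+) (p : Gen) : Gen :=
  if h : f p.val.1 < f p.val.2 then ⟨(f p.val.1, f p.val.2), h⟩ else p

/-- For an order-reversing `f`, the induced map on generators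
`(α,β) ↦ (f β, f α)`. -/
def vmapGen (f : ℕ+ → ℕ+) (p : Gen) : Gen :=
  if h : f p.val.2 < f p.val.1 then ⟨(f p.val.2, f p.val.1), h⟩ else p

/-- The map `φ_a : {1,2,…} → {1,2,…}`, `i ↦ i` for `i < a` and `i ↦ i+1` for `i ≥ a`. -/
def phiF (a : ℕ+) (i : ℕ+) : ℕ+ := if i < a then i else i + 1

end


section AuxIntervalIso
open scoped Classical

def InvSet (w : Sinf) : Set (ℕ+ × ℕ+) := {p | p.1 < p.2 ∧ w p.2 < w p.1}

lemma len_eq (w : Sinf) : len w = (InvSet w).ncard := rfl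

lemma finSupp_mul {x y : Sinf} (hx : FinSupp x) (hy : FinSupp y) : FinSupp (x * y) := by
  apply Set.Finite.subset (hx.union hy)
  intro i hi
  by_contra hc
  simp only [Set.mem_union, Set.mem_setOf_eq, not_or, not_not] at hc
  exact hi (by simp [Equiv.Perm.mul_apply, hc.1, hc.2])

lemma finSupp_inv {x : Sinf} (hx : FinSupp x) : FinSupp x⁻¹ := by
  apply Set.Finite.subset hx
  intro i hi
  simp only [Set.mem_setOf_eq] at hi ⊢
  intro h
  exact hi (by conv_lhs => rw [← h]; simp)

lemma finSupp_swap (a b : ℕ+) : FinSupp (Equiv.swap a b) := by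
  apply Set.Finite.subset ((Set.finite_singleton b).insert a)
  intro i hi
  simp only [Set.mem_setOf_eq] at hi
  by_contra hc
  simp only [Set.mem_insert_iff, Set.mem_singleton_iff, not_or] at hc
  exact hi (Equiv.swap_apply_of_ne_of_ne hc.1 hc.2)

lemma invSet_finite {x : Sinf} (hx : FinSupp x) : (InvSet x).Finite := by
  obtain ⟨N, hN⟩ : ∃ N : ℕ+, ∀ i, N < i → x i = i := by
    rcases hx.bddAbove with ⟨N, hN⟩
    exact ⟨N, fun i hi => by
      by_contra h
      exact absurd (hN h) (not_le.mpr hi)⟩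
  apply Set.Finite.subset ((Set.finite_Iic N).prod (Set.finite_Iic N))
  rintro ⟨i, j⟩ ⟨hij, hinv⟩
  simp only [Set.mem_prod, Set.mem_Iic]
  have hj : j ≤ N := by
    by_contra h
    push_neg at h
    have hxj : x j = j := hN j h
    have : N < x i := lt_trans h (hxj ▸ hinv)
    have hxi : x i ≠ i := by
      intro he
      rw [he] at hinv
      rw [hxj] at hinv
      exact absurd hinv (not_lt.mpr hij.le)
    -- x i > N; let m := x i, then x m = m since m > N, so x m = x i, m = i
    have hm : x (x i) = x i := hN _ this
    exact hxi (x.injective hm)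
  exact ⟨le_trans hij.le hj, hj⟩

lemma len_formula (x : Sinf) (hx : FinSupp x) (a b : ℕ+) (hab : a < b) (hv : x a < x b) :
    len (x * Equiv.swap a b) = len x + 1 +
      2 * {c : ℕ+ | a < c ∧ c < b ∧ x a < x c ∧ x c < x b}.ncard := by
  set s : Sinf := Equiv.swap a b with hs
  set y : Sinf := x * s with hy
  have hyapp : ∀ i, y i = x (s i) := fun i => rfl
  have hsa : s a = b := Equiv.swap_apply_left a b
  have hsb : s b = a := Equiv.swap_apply_right a b
  have hsc : ∀ c, c ≠ a → c ≠ b → s c = c := fun c h1 h2 => Equiv.swap_apply_of_ne_of_ne h1 h2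
  have hss : ∀ i, s (s i) = i := fun i => Equiv.swap_apply_self a b i
  -- the sets
  set A : Set (ℕ+ × ℕ+) := {p | p.1 < p.2 ∧ s p.1 < s p.2} with hA
  set B : Set (ℕ+ × ℕ+) := {p | p.1 < p.2 ∧ s p.2 < s p.1} with hB
  set NI : Set (ℕ+ × ℕ+) := {p | p.1 < p.2 ∧ x p.1 < x p.2} with hNI
  set M : Set ℕ+ := {c : ℕ+ | a < c ∧ c < b ∧ x a < x c ∧ x c < x b} with hM
  -- membership characterization of B
  have memB : ∀ p : ℕ+ × ℕ+, p ∈ B ↔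
      ((p.1 = a ∧ a < p.2 ∧ p.2 ≤ b) ∨ (p.2 = b ∧ a < p.1 ∧ p.1 < b)) := by
    rintro ⟨i, j⟩
    simp only [hB, Set.mem_setOf_eq]
    constructor
    · rintro ⟨hij, hsij⟩
      by_cases hia : i = a
      · left
        have hij' : a < j := hia ▸ hij
        refine ⟨hia, hij', ?_⟩
        by_cases hjb : j = b
        · exact le_of_eq hjb
        · rw [hia, hsa, hsc j (ne_of_gt hij') hjb] at hsij
          exact hsij.le
      · by_cases hib : i = b
        · exfalso
          have hbj : b < j := hib ▸ hij
          have hja : j ≠ a := ne_of_gt (lt_trans hab hbj)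
          have hjb : j ≠ b := ne_of_gt hbj
          rw [hib, hsb, hsc j hja hjb] at hsij
          exact absurd (lt_trans hab hbj) (not_lt.mpr hsij.le)
        · right
          rw [hsc i hia hib] at hsij
          by_cases hjb : j = b
          · rw [hjb, hsb] at hsij
            exact ⟨hjb, hsij, hjb ▸ hij⟩
          · exfalso
            by_cases hja : j = a
            · rw [hja, hsa] at hsij
              have hia' : i < a := hja ▸ hij
              exact absurd hsij (not_lt.mpr (lt_trans hia' hab).le)
            · rw [hsc j hja hjb] at hsij
              exact absurd hij (not_lt.mpr hsij.le)
    · rintro (⟨h1, h2, h3⟩ | ⟨h1, h2, h3⟩)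
      · refine ⟨h1 ▸ h2, ?_⟩
        rw [h1, hsa]
        by_cases hjb : j = b
        · rw [hjb, hsb]; exact hab
        · rw [hsc j (ne_of_gt h2) hjb]
          exact lt_of_le_of_ne h3 hjb
      · refine ⟨h1 ▸ h3, ?_⟩
        rw [h1, hsb, hsc i (ne_of_gt h2) (ne_of_lt h3)]
        exact h2
  -- finiteness of B
  have hBfin : B.Finite := by
    apply Set.Finite.subset ((Set.finite_Iic b).prod (Set.finite_Iic b))
    intro p hp
    rcases (memB p).mp hp with ⟨h1, h2, h3⟩ | ⟨h1, h2, h3⟩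
    · exact ⟨by simp [h1, hab.le], h3⟩
    · exact ⟨h3.le, by simp [h1]⟩
  have hIxfin := invSet_finite hx
  have hyfs : FinSupp y := finSupp_mul hx (finSupp_swap a b)
  have hIyfin := invSet_finite hyfs
  -- the involution e
  set e : ℕ+ × ℕ+ → ℕ+ × ℕ+ :=
    fun p => if s p.1 < s p.2 then (s p.1, s p.2) else (s p.2, s p.1) with he
  have hsne : ∀ p : ℕ+ × ℕ+, p.1 < p.2 → s p.1 ≠ s p.2 :=
    fun p h => fun hc => absurd (s.injective hc) (ne_of_lt h)
  have heA : ∀ p : ℕ+ × ℕ+, s p.1 < s p.2 → e p = (s p.1, s p.2) := by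
    intro p h
    simp only [he]
    rw [if_pos h]
  have heB : ∀ p : ℕ+ × ℕ+, s p.2 < s p.1 → e p = (s p.2, s p.1) := by
    intro p h
    simp only [he]
    rw [if_neg (not_lt.mpr h.le)]
  have hee : ∀ p : ℕ+ × ℕ+, p.1 < p.2 → e (e p) = p := by
    intro p hp
    rcases lt_or_gt_of_ne (hsne p hp) with h | h
    · rw [heA p h]
      have h2 : e (s p.1, s p.2) = (s (s p.1), s (s p.2)) :=
        heA _ (by show s (s p.1) < s (s p.2); rw [hss, hss]; exact hp)
      rw [h2, hss, hss]
    · rw [heB p h]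
      have h2 : e (s p.2, s p.1) = (s (s p.1), s (s p.2)) :=
        heB _ (by show s (s p.1) < s (s p.2); rw [hss, hss]; exact hp)
      rw [h2, hss, hss]
  have hesort : ∀ p : ℕ+ × ℕ+, p.1 < p.2 → (e p).1 < (e p).2 := by
    intro p hp
    rcases lt_or_gt_of_ne (hsne p hp) with h | h
    · rw [heA p h]; exact h
    · rw [heB p h]; exact h
  -- pointwise: p ∈ Inv y ↔ e p ∈ (Inv x ∩ A) ∪ (NI ∩ B), for sorted p
  have hmem : ∀ p : ℕ+ × ℕ+, p.1 < p.2 →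
      (p ∈ InvSet y ↔ e p ∈ (InvSet x ∩ A) ∪ (NI ∩ B)) := by
    intro p hp
    rcases lt_or_gt_of_ne (hsne p hp) with h | h
    · rw [heA p h]
      simp only [InvSet, hA, hB, hNI, Set.mem_union, Set.mem_inter_iff, Set.mem_setOf_eq,
        hss, hyapp]
      constructor
      · rintro ⟨_, hxy⟩
        exact Or.inl ⟨⟨h, hxy⟩, h, hp⟩
      · rintro (⟨⟨_, hxy⟩, _⟩ | ⟨_, _, hc⟩)
        · exact ⟨hp, hxy⟩
        · exact absurd hp (not_lt.mpr hc.le)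
    · rw [heB p h]
      simp only [InvSet, hA, hB, hNI, Set.mem_union, Set.mem_inter_iff, Set.mem_setOf_eq,
        hss, hyapp]
      constructor
      · rintro ⟨_, hxy⟩
        exact Or.inr ⟨⟨h, hxy⟩, h, hp⟩
      · rintro (⟨⟨_, _⟩, _, hc⟩ | ⟨⟨_, hxy⟩, _⟩)
        · exact absurd hp (not_lt.mpr hc.le)
        · exact ⟨hp, hxy⟩
  -- image equality
  have himg : e '' (InvSet y) = (InvSet x ∩ A) ∪ (NI ∩ B) := by
    apply Set.eq_of_subset_of_subset
    · rintro q ⟨p, hp, rfl⟩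
      exact (hmem p hp.1).mp hp
    · intro q hq
      have hqsort : q.1 < q.2 := by
        rcases hq with ⟨⟨h1, _⟩, _⟩ | ⟨⟨h1, _⟩, _⟩ <;> exact h1
      refine ⟨e q, ?_, hee q hqsort⟩
      have := hmem (e q) (hesort q hqsort)
      rw [hee q hqsort] at this
      exact this.mpr hq
  have hinj : Set.InjOn e (InvSet y) := by
    intro p hp q hq hpq
    have := congrArg e hpq
    rwa [hee p hp.1, hee q hq.1] at this
  have hdisj1 : Disjoint (InvSet x ∩ A) (NI ∩ B) := by
    rw [Set.disjoint_iff]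
    rintro p ⟨⟨_, hpA⟩, _, hpB⟩
    exact absurd hpA.2 (not_lt.mpr hpB.2.le)
  have hcard1 : (InvSet y).ncard = (InvSet x ∩ A).ncard + (NI ∩ B).ncard := by
    rw [← Set.ncard_image_of_injOn hinj, himg]
    exact Set.ncard_union_eq hdisj1 (hIxfin.subset Set.inter_subset_left)
      (hBfin.subset Set.inter_subset_right)
  -- Inv x splits along A, B
  have hsplit : InvSet x = (InvSet x ∩ A) ∪ (InvSet x ∩ B) := by
    ext p
    simp only [Set.mem_union, Set.mem_inter_iff, hA, hB, Set.mem_setOf_eq]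
    constructor
    · intro hp
      rcases lt_or_gt_of_ne (hsne p hp.1) with h | h
      · exact Or.inl ⟨hp, hp.1, h⟩
      · exact Or.inr ⟨hp, hp.1, h⟩
    · rintro (⟨hp, _⟩ | ⟨hp, _⟩) <;> exact hp
  have hdisj2 : Disjoint (InvSet x ∩ A) (InvSet x ∩ B) := by
    rw [Set.disjoint_iff]
    rintro p ⟨⟨_, _, hpA⟩, _, _, hpB⟩
    exact absurd hpA (not_lt.mpr hpB.le)
  have hcard2 : (InvSet x).ncard = (InvSet x ∩ A).ncard + (InvSet x ∩ B).ncard := by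
    rw [← Set.ncard_union_eq hdisj2 (hIxfin.subset Set.inter_subset_left)
      (hIxfin.subset Set.inter_subset_left), ← hsplit]
  -- slice sets on B
  set S1 : Set ℕ+ := {c : ℕ+ | a < c ∧ c ≤ b ∧ x c < x a} with hS1
  set S2 : Set ℕ+ := {c : ℕ+ | a < c ∧ c < b ∧ x b < x c} with hS2
  set T1 : Set ℕ+ := {c : ℕ+ | a < c ∧ c ≤ b ∧ x a < x c} with hT1
  set T2 : Set ℕ+ := {c : ℕ+ | a < c ∧ c < b ∧ x c < x b} with hT2
  set S1' : Set ℕ+ := {c : ℕ+ | a < c ∧ c < b ∧ x c < x a} with hS1'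
  set T1' : Set ℕ+ := {c : ℕ+ | a < c ∧ c < b ∧ x a < x c} with hT1'
  have hIocfin : (Set.Ioc a b).Finite := Set.finite_Ioc a b
  have hS1fin : S1.Finite := hIocfin.subset (fun c hc => ⟨hc.1, hc.2.1⟩)
  have hS2fin : S2.Finite := hIocfin.subset (fun c hc => ⟨hc.1, hc.2.1.le⟩)
  have hT1fin : T1.Finite := hIocfin.subset (fun c hc => ⟨hc.1, hc.2.1⟩)
  have hT2fin : T2.Finite := hIocfin.subset (fun c hc => ⟨hc.1, hc.2.1.le⟩)
  have hS1'fin : S1'.Finite := hIocfin.subset (fun c hc => ⟨hc.1, hc.2.1.le⟩)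
  have hT1'fin : T1'.Finite := hIocfin.subset (fun c hc => ⟨hc.1, hc.2.1.le⟩)
  have hMfin : M.Finite := hIocfin.subset (fun c hc => ⟨hc.1, hc.2.1.le⟩)
  have inj1 : Function.Injective (fun c : ℕ+ => ((a : ℕ+), c)) := by
    intro c d hcd
    simpa using hcd
  have inj2 : Function.Injective (fun c : ℕ+ => (c, (b : ℕ+))) := by
    intro c d hcd
    simpa using hcd
  -- decomposition lemma for intersections with B
  have hsliceI : InvSet x ∩ B =
      ((fun c : ℕ+ => ((a : ℕ+), c)) '' S1) ∪ ((fun c : ℕ+ => (c, (b : ℕ+))) '' S2) := by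
    ext p
    obtain ⟨i, j⟩ := p
    simp only [Set.mem_inter_iff, Set.mem_union, Set.mem_image, InvSet, Set.mem_setOf_eq,
      hS1, hS2, Prod.mk.injEq]
    constructor
    · rintro ⟨⟨hij, hinv⟩, hpB⟩
      rcases (memB (i, j)).mp hpB with ⟨h1, h2, h3⟩ | ⟨h1, h2, h3⟩
      · exact Or.inl ⟨j, ⟨h2, h3, h1 ▸ hinv⟩, h1.symm, rfl⟩
      · exact Or.inr ⟨i, ⟨h2, h3, h1 ▸ hinv⟩, rfl, h1.symm⟩
    · rintro (⟨c, ⟨hc1, hc2, hc3⟩, rfl, rfl⟩ | ⟨c, ⟨hc1, hc2, hc3⟩, rfl, rfl⟩)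
      · exact ⟨⟨hc1, hc3⟩, (memB (a, c)).mpr (Or.inl ⟨rfl, hc1, hc2⟩)⟩
      · exact ⟨⟨hc2, hc3⟩, (memB (c, b)).mpr (Or.inr ⟨rfl, hc1, hc2⟩)⟩
  have hsliceN : NI ∩ B =
      ((fun c : ℕ+ => ((a : ℕ+), c)) '' T1) ∪ ((fun c : ℕ+ => (c, (b : ℕ+))) '' T2) := by
    ext p
    obtain ⟨i, j⟩ := p
    simp only [Set.mem_inter_iff, Set.mem_union, Set.mem_image, hNI, Set.mem_setOf_eq,
      hT1, hT2, Prod.mk.injEq]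
    constructor
    · rintro ⟨⟨hij, hinv⟩, hpB⟩
      rcases (memB (i, j)).mp hpB with ⟨h1, h2, h3⟩ | ⟨h1, h2, h3⟩
      · exact Or.inl ⟨j, ⟨h2, h3, h1 ▸ hinv⟩, h1.symm, rfl⟩
      · exact Or.inr ⟨i, ⟨h2, h3, h1 ▸ hinv⟩, rfl, h1.symm⟩
    · rintro (⟨c, ⟨hc1, hc2, hc3⟩, rfl, rfl⟩ | ⟨c, ⟨hc1, hc2, hc3⟩, rfl, rfl⟩)
      · exact ⟨⟨hc1, hc3⟩, (memB (a, c)).mpr (Or.inl ⟨rfl, hc1, hc2⟩)⟩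
      · exact ⟨⟨hc2, hc3⟩, (memB (c, b)).mpr (Or.inr ⟨rfl, hc1, hc2⟩)⟩
  have hdisjIm : ∀ U V : Set ℕ+, (∀ c ∈ U, a < c) →
      Disjoint ((fun c : ℕ+ => ((a : ℕ+), c)) '' V) ((fun c : ℕ+ => (c, (b : ℕ+))) '' U) := by
    intro U V hU
    rw [Set.disjoint_iff]
    rintro p ⟨⟨c, _, rfl⟩, ⟨c', hc', heq⟩⟩
    simp only [Prod.mk.injEq] at heq
    exact absurd (heq.1 ▸ hU c' hc') (lt_irrefl a)
  have hcardIB : (InvSet x ∩ B).ncard = S1.ncard + S2.ncard := by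
    rw [hsliceI, Set.ncard_union_eq (hdisjIm S2 S1 (fun c hc => hc.1))
      (hS1fin.image _) (hS2fin.image _),
      Set.ncard_image_of_injective _ inj1, Set.ncard_image_of_injective _ inj2]
  have hcardNB : (NI ∩ B).ncard = T1.ncard + T2.ncard := by
    rw [hsliceN, Set.ncard_union_eq (hdisjIm T2 T1 (fun c hc => hc.1))
      (hT1fin.image _) (hT2fin.image _),
      Set.ncard_image_of_injective _ inj1, Set.ncard_image_of_injective _ inj2]
  -- simplify the slice sets
  have hS1eq : S1 = S1' := by
    ext c
    simp only [hS1, hS1', Set.mem_setOf_eq]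
    constructor
    · rintro ⟨h1, h2, h3⟩
      refine ⟨h1, lt_of_le_of_ne h2 ?_, h3⟩
      rintro rfl
      exact absurd (lt_trans h3 hv) (lt_irrefl _)
    · rintro ⟨h1, h2, h3⟩
      exact ⟨h1, h2.le, h3⟩
  have hT1eq : T1 = insert b T1' := by
    ext c
    simp only [hT1, hT1', Set.mem_insert_iff, Set.mem_setOf_eq]
    constructor
    · rintro ⟨h1, h2, h3⟩
      rcases eq_or_lt_of_le h2 with h | h
      · exact Or.inl h
      · exact Or.inr ⟨h1, h, h3⟩
    · rintro (rfl | ⟨h1, h2, h3⟩)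
      · exact ⟨hab, le_refl _, hv⟩
      · exact ⟨h1, h2.le, h3⟩
  have hT1card : T1.ncard = T1'.ncard + 1 := by
    rw [hT1eq, Set.ncard_insert_of_notMem (fun hc => absurd hc.2.1 (lt_irrefl b)) hT1'fin]
  have hT1'eq : T1' = M ∪ S2 := by
    ext c
    simp only [hT1', hM, hS2, Set.mem_union, Set.mem_setOf_eq]
    constructor
    · rintro ⟨h1, h2, h3⟩
      rcases lt_trichotomy (x c) (x b) with h | h | h
      · exact Or.inl ⟨h1, h2, h3, h⟩
      · exact absurd (x.injective h) (ne_of_lt h2)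
      · exact Or.inr ⟨h1, h2, h⟩
    · rintro (⟨h1, h2, h3, _⟩ | ⟨h1, h2, h3⟩)
      · exact ⟨h1, h2, h3⟩
      · exact ⟨h1, h2, lt_trans hv h3⟩
  have hT2eq : T2 = M ∪ S1' := by
    ext c
    simp only [hT2, hM, hS1', Set.mem_union, Set.mem_setOf_eq]
    constructor
    · rintro ⟨h1, h2, h3⟩
      rcases lt_trichotomy (x a) (x c) with h | h | h
      · exact Or.inl ⟨h1, h2, h, h3⟩
      · exact absurd (x.injective h) (ne_of_lt h1)
      · exact Or.inr ⟨h1, h2, h⟩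
    · rintro (⟨h1, h2, _, h4⟩ | ⟨h1, h2, h3⟩)
      · exact ⟨h1, h2, h4⟩
      · exact ⟨h1, h2, lt_trans h3 hv⟩
  have hdisjMS2 : Disjoint M S2 := by
    rw [Set.disjoint_iff]
    rintro c ⟨⟨_, _, _, h4⟩, _, _, h3⟩
    exact absurd h4 (not_lt.mpr h3.le)
  have hdisjMS1 : Disjoint M S1' := by
    rw [Set.disjoint_iff]
    rintro c ⟨⟨_, _, h3, _⟩, _, _, h3'⟩
    exact absurd h3 (not_lt.mpr h3'.le)
  have hT1'card : T1'.ncard = M.ncard + S2.ncard := by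
    rw [hT1'eq, Set.ncard_union_eq hdisjMS2 hMfin hS2fin]
  have hT2card : T2.ncard = M.ncard + S1'.ncard := by
    rw [hT2eq, Set.ncard_union_eq hdisjMS1 hMfin hS1'fin]
  -- put it all together
  rw [len_eq, len_eq, hcard1, hcard2, hcardIB, hcardNB, hT1card, hT1'card, hT2card,
    hS1eq]
  omega

/-- If `x a < x b` and no intermediate value sits at an intermediate position,
then right-multiplying by the transposition increases length by exactly 1. -/
lemma len_swap_succ (x : Sinf) (hx : FinSupp x) (a b : ℕ+) (hab : a < b) (hv : x a < x b)
    (hmid : ∀ c, a < c → c < b → ¬(x a < x c ∧ x c < x b)) :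
    len (x * Equiv.swap a b) = len x + 1 := by
  have hM : {c : ℕ+ | a < c ∧ c < b ∧ x a < x c ∧ x c < x b} = (∅ : Set ℕ+) := by
    ext c
    simp only [Set.mem_setOf_eq, Set.mem_empty_iff_false, iff_false]
    rintro ⟨h1, h2, h3, h4⟩
    exact hmid c h1 h2 ⟨h3, h4⟩
  rw [len_formula x hx a b hab hv, hM]
  simp

lemma len_swap_lt (x : Sinf) (hx : FinSupp x) (a b : ℕ+) (hab : a < b) (hv : x b < x a) :
    len (x * Equiv.swap a b) < len x := by
  set y : Sinf := x * Equiv.swap a b with hy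
  have hyfs : FinSupp y := finSupp_mul hx (finSupp_swap a b)
  have hya : y a = x b := by simp [hy]
  have hyb : y b = x a := by simp [hy]
  have hx' : x = y * Equiv.swap a b := by
    rw [hy, mul_assoc]
    simp [Equiv.swap_mul_self]
  have := len_formula y hyfs a b hab (by rw [hya, hyb]; exact hv)
  rw [← hx'] at this
  omega

/-- Structure of a `k`-cover. -/
lemma kCover_structure {k : ℕ+} {x y : Sinf} (hx : FinSupp x) (hc : kCover k x y) :
    ∃ a b : ℕ+, a ≤ k ∧ k < b ∧ y = x * Equiv.swap a b ∧ x a < x b ∧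
      (∀ c, a < c → c < b → ¬(x a < x c ∧ x c < x b)) := by
  obtain ⟨hlen, a, b, hak, hkb, hyeq⟩ := hc
  have hab : a < b := lt_of_le_of_lt hak hkb
  rcases lt_or_gt_of_ne (fun hc' : x a = x b => absurd (x.injective hc') (ne_of_lt hab))
    with hv | hv
  · refine ⟨a, b, hak, hkb, hyeq, hv, ?_⟩
    intro c h1 h2 ⟨h3, h4⟩
    have hne : {c : ℕ+ | a < c ∧ c < b ∧ x a < x c ∧ x c < x b}.Nonempty :=
      ⟨c, h1, h2, h3, h4⟩
    have hfin : {c : ℕ+ | a < c ∧ c < b ∧ x a < x c ∧ x c < x b}.Finite :=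
      (Set.finite_Ioo a b).subset (fun c hc => ⟨hc.1, hc.2.1⟩)
    have hpos := (Set.ncard_pos hfin).mpr hne
    have := len_formula x hx a b hab hv
    rw [← hyeq] at this
    omega
  · exfalso
    have := len_swap_lt x hx a b hab hv
    rw [← hyeq] at this
    omega

lemma finSupp_of_kCover {k : ℕ+} {x y : Sinf} (hx : FinSupp x) (hc : kCover k x y) :
    FinSupp y := by
  obtain ⟨_, a, b, _, _, hyeq⟩ := hc
  rw [hyeq]
  exact finSupp_mul hx (finSupp_swap a b)

lemma finSupp_of_kBruhat {k : ℕ+} {x y : Sinf} (hx : FinSupp x) (h : kBruhat k x y) :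
    FinSupp y := by
  induction h with
  | refl => exact hx
  | tail _ hc ih => exact finSupp_of_kCover ih hc

/-- Fact 1: monotonicity of values along the `k`-Bruhat order. -/
lemma kBruhat_mono {k : ℕ+} {u w : Sinf} (hu : FinSupp u) (h : kBruhat k u w) :
    (∀ c, c ≤ k → u c ≤ w c) ∧ (∀ c, k < c → w c ≤ u c) := by
  induction h with
  | refl => exact ⟨fun _ _ => le_refl _, fun _ _ => le_refl _⟩
  | @tail v w hv hc ih =>
    have hvfs : FinSupp v := finSupp_of_kBruhat hu hv
    obtain ⟨a, b, hak, hkb, hyeq, hab', _⟩ := kCover_structure hvfs hc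
    have hab : a < b := lt_of_le_of_lt hak hkb
    constructor
    · intro c hck
      refine le_trans (ih.1 c hck) ?_
      rw [hyeq]
      by_cases hca : c = a
      · rw [hca]
        simp only [Equiv.Perm.mul_apply, Equiv.swap_apply_left]
        exact hab'.le
      · by_cases hcb : c = b
        · exact absurd (hcb ▸ hck) (not_le.mpr hkb)
        · simp only [Equiv.Perm.mul_apply, Equiv.swap_apply_of_ne_of_ne hca hcb, le_refl]
    · intro c hck
      refine le_trans ?_ (ih.2 c hck)
      rw [hyeq]
      by_cases hcb : c = b
      · rw [hcb]
        simp only [Equiv.Perm.mul_apply, Equiv.swap_apply_right]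
        exact hab'.le
      · by_cases hca : c = a
        · exact absurd (hca ▸ hck) (not_lt.mpr hak)
        · simp only [Equiv.Perm.mul_apply, Equiv.swap_apply_of_ne_of_ne hca hcb, le_refl]

/-- Fact 2: a new inversion must straddle `k`. -/
lemma kBruhat_newInv {k : ℕ+} {u w : Sinf} (hu : FinSupp u) (h : kBruhat k u w) :
    ∀ p q : ℕ+, p < q → u p < u q → w q < w p → p ≤ k ∧ k < q := by
  induction h with
  | refl =>
    intro p q _ h1 h2
    exact absurd h1 (not_lt.mpr h2.le)
  | @tail v w hv hc ih =>
    have hvfs : FinSupp v := finSupp_of_kBruhat hu hv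
    obtain ⟨a, b, hak, hkb, hyeq, hab', hmid⟩ := kCover_structure hvfs hc
    have hab : a < b := lt_of_le_of_lt hak hkb
    have hwa : w a = v b := by rw [hyeq]; simp
    have hwb : w b = v a := by rw [hyeq]; simp
    have hwc : ∀ c, c ≠ a → c ≠ b → w c = v c := by
      intro c h1 h2
      rw [hyeq]
      simp [Equiv.swap_apply_of_ne_of_ne h1 h2]
    intro p q hpq h1 h2
    by_cases hpa : p = a
    · subst hpa
      refine ⟨hak, ?_⟩
      by_cases hqb : q = b
      · exact hqb ▸ hkb
      · rw [hwa] at h2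
        rw [hwc q (ne_of_gt hpq) hqb] at h2
        by_cases hvq : v q < v p
        · exact (ih p q hpq h1 hvq).2
        · push_neg at hvq
          have hvq' : v p < v q := lt_of_le_of_ne hvq
            (fun hcq => absurd (v.injective hcq.symm) (ne_of_lt hpq).symm)
          -- v p < v q < v b, so q is a middle position unless q > b
          rcases lt_trichotomy q b with hqb' | hqb'' | hqb'
          · exact absurd ⟨hvq', h2⟩ (hmid q hpq hqb')
          · exact absurd hqb'' hqb
          · exact lt_trans hkb hqb'
    · by_cases hpb : p = b
      · -- p = b < q, w p = v a, w q = v q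
        have hbq : b < q := hpb ▸ hpq
        have hqa : q ≠ a := ne_of_gt (lt_trans hab hbq)
        have hqb : q ≠ b := ne_of_gt hbq
        rw [hpb, hwb, hwc q hqa hqb] at h2
        have hvqp : v q < v p := by rw [hpb]; exact lt_trans h2 hab'
        have := (ih p q hpq h1 hvqp).1
        rw [hpb] at this
        exact absurd hkb (not_lt.mpr this)
      · by_cases hqa : q = a
        · -- p < q = a, w q = v b, w p = v p
          have hpa' : p < a := hqa ▸ hpq
          rw [hqa, hwa, hwc p hpa hpb] at h2
          have hvpq : v q < v p := by rw [hqa]; exact lt_trans hab' h2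
          have := (ih p q hpq h1 hvpq).2
          rw [hqa] at this
          exact absurd hak (not_le.mpr this)
        · by_cases hqb : q = b
          · subst hqb
            refine ⟨?_, hkb⟩
            rw [hwb, hwc p hpa hpb] at h2
            by_cases hvq : v q < v p
            · exact (ih p q hpq h1 hvq).1
            · push_neg at hvq
              have hvq' : v p < v q := lt_of_le_of_ne hvq
                (fun hcq => absurd (v.injective hcq.symm) (ne_of_lt hpq).symm)
              -- v a < v p < v b with p < b: middle unless p < a
              rcases lt_trichotomy p a with hpa' | hpa'' | hpa'
              · exact le_of_lt (lt_of_lt_of_le hpa' hak)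
              · exact absurd hpa'' hpa
              · exact absurd ⟨h2, hvq'⟩ (hmid p hpa' hpq)
          · rw [hwc p hpa hpb, hwc q hqa hqb] at h2
            exact ih p q hpq h1 h2

/-- Transport of a single cover along the correspondence `v ↦ v u⁻¹ u'`. -/
lemma kCover_transport {k k' : ℕ+} {u w u' w' x y : Sinf}
    (hu : FinSupp u) (hu' : FinSupp u')
    (hux : kBruhat k u x) (hyw : kBruhat k y w) (h' : kBruhat k' u' w')
    (hq : w * u⁻¹ = w' * u'⁻¹) (hc : kCover k x y) :
    kCover k' (x * u⁻¹ * u') (y * u⁻¹ * u') := by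
  have hx : FinSupp x := finSupp_of_kBruhat hu hux
  obtain ⟨a, b, hak, hkb, hyeq, hab', hmid⟩ := kCover_structure hx hc
  have hab : a < b := lt_of_le_of_lt hak hkb
  have hy : FinSupp y := by rw [hyeq]; exact finSupp_mul hx (finSupp_swap a b)
  -- w' in terms of w
  have hw' : w' = w * u⁻¹ * u' := by
    rw [hq, mul_assoc]
    simp
  -- values of y
  have hya : y a = x b := by rw [hyeq]; simp
  have hyb : y b = x a := by rw [hyeq]; simp
  have hyc : ∀ c, c ≠ a → c ≠ b → y c = x c := by
    intro c h1 h2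
    rw [hyeq]
    simp [Equiv.swap_apply_of_ne_of_ne h1 h2]
  -- the position translation f = u'⁻¹ ∘ u
  set f : ℕ+ → ℕ+ := fun t => u'⁻¹ (u t) with hf
  set x' : Sinf := x * u⁻¹ * u' with hx'
  set y' : Sinf := y * u⁻¹ * u' with hy'
  have hx'app : ∀ t, x' (f t) = x t := by
    intro t
    simp [hx', hf, Equiv.Perm.mul_apply]
  have hy'app : ∀ t, y' (f t) = y t := by
    intro t
    simp [hy', hf, Equiv.Perm.mul_apply]
  have hu'f : ∀ t, u' (f t) = u t := by
    intro t
    simp [hf]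
  have hw'f : ∀ t, w' (f t) = w t := by
    intro t
    rw [hw']
    simp [hf, Equiv.Perm.mul_apply]
  have hfsurj : ∀ c : ℕ+, ∃ t, f t = c := fun c => ⟨u⁻¹ (u' c), by simp [hf]⟩
  -- basic inequalities from the chains
  have hmono1 := kBruhat_mono hu hux
  have hmono2 := kBruhat_mono hy hyw
  have hmono' := kBruhat_mono hu' h'
  have hnew1 := kBruhat_newInv hu hux
  have hnew2 := kBruhat_newInv hy hyw
  have hnew' := kBruhat_newInv hu' h'
  have hua : u a ≤ x a := hmono1.1 a hak
  have hub : x b ≤ u b := hmono1.2 b hkb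
  have hwa : x b ≤ w a := hya ▸ hmono2.1 a hak
  have hwb : w b ≤ x a := hyb ▸ hmono2.2 b hkb
  -- a' ≤ k' < b'
  have hfa : f a ≤ k' := by
    by_contra hcon
    push_neg at hcon
    have := hmono'.2 (f a) hcon
    rw [hu'f, hw'f] at this
    exact absurd (lt_of_le_of_lt hua (lt_of_lt_of_le hab' hwa)) (not_lt.mpr this)
  have hfb : k' < f b := by
    by_contra hcon
    push_neg at hcon
    have := hmono'.1 (f b) hcon
    rw [hu'f, hw'f] at this
    exact absurd (lt_of_le_of_lt hwb (lt_of_lt_of_le hab' hub)) (not_lt.mpr this)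
  have hfab : f a < f b := lt_of_le_of_lt hfa hfb
  -- y' = x' * swap (f a) (f b)
  have hswap : y' = x' * Equiv.swap (f a) (f b) := by
    rw [hy', hx', hyeq]
    have key : Equiv.swap a b * (u⁻¹ * u') = (u⁻¹ * u') * Equiv.swap (f a) (f b) := by
      have h1 : Equiv.swap (f a) (f b) = (u⁻¹ * u')⁻¹ * Equiv.swap a b * (u⁻¹ * u') := by
        have := Equiv.swap_apply_apply ((u⁻¹ * u')⁻¹ : Sinf) a b
        have e1 : ((u⁻¹ * u')⁻¹ : Sinf) a = f a := by simp [hf, Equiv.Perm.mul_apply]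
        have e2 : ((u⁻¹ * u')⁻¹ : Sinf) b = f b := by simp [hf, Equiv.Perm.mul_apply]
        rw [e1, e2] at this
        rw [this]
        group
      rw [h1]
      group
    calc x * Equiv.swap a b * u⁻¹ * u' = x * (Equiv.swap a b * (u⁻¹ * u')) := by group
      _ = x * ((u⁻¹ * u') * Equiv.swap (f a) (f b)) := by rw [key]
      _ = x * u⁻¹ * u' * Equiv.swap (f a) (f b) := by group
  -- x' values at f a, f b
  have hx'a : x' (f a) = x a := hx'app a
  have hx'b : x' (f b) = x b := hx'app b
  -- no middle elements for x' on (f a, f b)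
  have hmid' : ∀ c, f a < c → c < f b → ¬(x' (f a) < x' c ∧ x' c < x' (f b)) := by
    rintro c hc1 hc2 ⟨hg1, hg2⟩
    obtain ⟨t, rfl⟩ := hfsurj c
    rw [hx'a] at hg1
    rw [hx'b] at hg2
    rw [hx'app t] at hg1 hg2
    -- t ≠ a, t ≠ b
    have hta : t ≠ a := fun hc' => absurd (hc' ▸ hg1) (lt_irrefl _)
    have htb : t ≠ b := fun hc' => absurd (hc' ▸ hg2) (lt_irrefl _)
    have hyt : y t = x t := hyc t hta htb
    -- t not strictly between a and b
    rcases lt_trichotomy t a with hta' | hta'' | hta'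
    · -- case t < a
      -- u t > u a from Fact 2 on u ≤ x
      have hut : u a < u t := by
        by_contra hcon
        push_neg at hcon
        have hut' : u t < u a := lt_of_le_of_ne hcon
          (fun hcq => absurd (u.injective hcq) hta)
        have := (hnew1 t a hta' hut' hg1).2
        exact absurd hak (not_le.mpr this)
      -- w t < w a from Fact 2 on y ≤ w
      have hwt : w t < w a := by
        by_contra hcon
        push_neg at hcon
        have hwt' : w a < w t := lt_of_le_of_ne hcon
          (fun hcq => absurd (w.injective hcq) (Ne.symm hta))
        have hyta : y t < y a := by rw [hya, hyt]; exact hg2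
        have := (hnew2 t a hta' hyta hwt').2
        exact absurd hak (not_le.mpr this)
      -- Fact 1 bounds at t (t < a ≤ k)
      have htk : t ≤ k := le_of_lt (lt_of_lt_of_le hta' hak)
      have hut2 : u t ≤ x t := hmono1.1 t htk
      have hwt2 : x t ≤ w t := by
        have := hmono2.1 t htk
        rwa [hyt] at this
      -- primed pair (f a, f t): creates inversion, so k' < f t
      have hp1 : k' < f t := by
        have hu'lt : u' (f a) < u' (f t) := by rw [hu'f, hu'f]; exact hut
        have hw'lt : w' (f t) < w' (f a) := by rw [hw'f, hw'f]; exact hwt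
        exact (hnew' (f a) (f t) hc1 hu'lt hw'lt).2
      -- primed pair (f t, f b): creates inversion, so f t ≤ k'
      have hp2 : f t ≤ k' := by
        have hu'lt : u' (f t) < u' (f b) := by
          rw [hu'f, hu'f]
          exact lt_of_le_of_lt hut2 (lt_of_lt_of_le hg2 hub)
        have hw'lt : w' (f b) < w' (f t) := by
          rw [hw'f, hw'f]
          exact lt_of_le_of_lt hwb (lt_of_lt_of_le hg1 hwt2)
        exact (hnew' (f t) (f b) hc2 hu'lt hw'lt).1
      exact absurd hp1 (not_lt.mpr hp2)
    · exact hta hta''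
    · rcases lt_trichotomy t b with htb' | htb'' | htb'
      · -- a < t < b : contradicts hmid
        exact hmid t hta' htb' ⟨hg1, hg2⟩
      · exact htb htb''
      · -- case b < t
        have hut : u t < u b := by
          by_contra hcon
          push_neg at hcon
          have hut' : u b < u t := lt_of_le_of_ne hcon
            (fun hcq => absurd (u.injective hcq) (fun hc' => htb hc'.symm))
          have := (hnew1 b t htb' hut' hg2).1
          exact absurd hkb (not_lt.mpr this)
        have hwt : w b < w t := by
          by_contra hcon
          push_neg at hcon
          have hwt' : w t < w b := lt_of_le_of_ne hcon
            (fun hcq => absurd (w.injective hcq) htb)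
          have hybt : y b < y t := by rw [hyb, hyt]; exact hg1
          have := (hnew2 b t htb' hybt hwt').1
          exact absurd hkb (not_lt.mpr this)
        have htk : k < t := lt_trans hkb htb'
        have hut2 : x t ≤ u t := hmono1.2 t htk
        have hwt2 : w t ≤ x t := by
          have := hmono2.2 t htk
          rwa [hyt] at this
        -- primed pair (f t, f b): creates inversion, so f t ≤ k'
        have hp2 : f t ≤ k' := by
          have hu'lt : u' (f t) < u' (f b) := by rw [hu'f, hu'f]; exact hut
          have hw'lt : w' (f b) < w' (f t) := by rw [hw'f, hw'f]; exact hwt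
          exact (hnew' (f t) (f b) hc2 hu'lt hw'lt).1
        -- primed pair (f a, f t): creates inversion, so k' < f t
        have hp1 : k' < f t := by
          have hu'lt : u' (f a) < u' (f t) := by
            rw [hu'f, hu'f]
            exact lt_of_le_of_lt hua (lt_of_lt_of_le hg1 hut2)
          have hw'lt : w' (f t) < w' (f a) := by
            rw [hw'f, hw'f]
            exact lt_of_le_of_lt hwt2 (lt_of_lt_of_le hg2 hwa)
          exact (hnew' (f a) (f t) hc1 hu'lt hw'lt).2
        exact absurd hp1 (not_lt.mpr hp2)
  -- conclude
  have hx'fs : FinSupp x' := finSupp_mul (finSupp_mul hx (finSupp_inv hu)) hu'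
  have hx'v : x' (f a) < x' (f b) := by rw [hx'a, hx'b]; exact hab'
  refine ⟨?_, f a, f b, hfa, hfb, hswap⟩
  rw [hswap]
  exact len_swap_succ x' hx'fs (f a) (f b) hfab hx'v hmid'

/-- Transport of a whole chain. -/
lemma kBruhat_transport {k k' : ℕ+} {u w u' w' : Sinf}
    (hu : FinSupp u) (hu' : FinSupp u')
    (h' : kBruhat k' u' w') (hq : w * u⁻¹ = w' * u'⁻¹) :
    ∀ x y : Sinf, kBruhat k u x → kBruhat k x y → kBruhat k y w →
      kBruhat k' (x * u⁻¹ * u') (y * u⁻¹ * u') := by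
  intro x y hux hxy hyw
  induction hxy using Relation.ReflTransGen.head_induction_on with
  | refl => exact Relation.ReflTransGen.refl
  | @head p q hpq hqy ih =>
    have hup : kBruhat k u p := hux
    have huq : kBruhat k u q := hup.tail hpq
    have hqw : kBruhat k q w := hqy.trans hyw
    exact Relation.ReflTransGen.head
      (kCover_transport hu hu' hup hqw h' hq hpq) (ih huq)

end AuxIntervalIso

/-- Theorem E of [BS97a]. If `u ≤ₖ w`, `u' ≤_{k'} w'` and
`wu⁻¹ = w'(u')⁻¹`, then `v ↦ vu⁻¹u'` is a poset isomorphism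
`[u,w]ₖ ≅ [u',w']_{k'}`. -/
theorem interval_isomorphism (k k' : ℕ+) (u w u' w' : Sinf)
    (hu : FinSupp u) (hw : FinSupp w) (hu' : FinSupp u') (hw' : FinSupp w')
    (h : kBruhat k u w) (h' : kBruhat k' u' w')
    (hq : w * u⁻¹ = w' * u'⁻¹) :
    (∀ v : Sinf, (kBruhat k u v ∧ kBruhat k v w) ↔
      (kBruhat k' u' (v * u⁻¹ * u') ∧ kBruhat k' (v * u⁻¹ * u') w')) ∧
    (∀ v₁ v₂ : Sinf,
      kBruhat k u v₁ → kBruhat k v₁ w → kBruhat k u v₂ → kBruhat k v₂ w →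
      (kBruhat k v₁ v₂ ↔ kBruhat k' (v₁ * u⁻¹ * u') (v₂ * u⁻¹ * u'))) := by
  have hq' : w' * u'⁻¹ = w * u⁻¹ := hq.symm
  have euu : u * u⁻¹ * u' = u' := by group
  have eww : w * u⁻¹ * u' = w' := by rw [hq]; group
  have eu'u : u' * u'⁻¹ * u = u := by group
  have ew'u : w' * u'⁻¹ * u = w := by rw [hq']; group
  have eback : ∀ v : Sinf, (v * u⁻¹ * u') * u'⁻¹ * u = v := by intro v; group
  constructor
  · intro v
    constructor
    · rintro ⟨h1, h2⟩
      constructor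
      · have := kBruhat_transport hu hu' h' hq u v (Relation.ReflTransGen.refl) h1 h2
        rwa [euu] at this
      · have := kBruhat_transport hu hu' h' hq v w h1 h2 (Relation.ReflTransGen.refl)
        rwa [eww] at this
    · rintro ⟨h1, h2⟩
      constructor
      · have := kBruhat_transport hu' hu h hq' u' (v * u⁻¹ * u')
          (Relation.ReflTransGen.refl) h1 h2
        rwa [eu'u, eback] at this
      · have := kBruhat_transport hu' hu h hq' (v * u⁻¹ * u') w' h1 h2
          (Relation.ReflTransGen.refl)
        rwa [eback, ew'u] at this
  · intro v₁ v₂ hu1 h1w hu2 h2w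
    constructor
    · intro h12
      exact kBruhat_transport hu hu' h' hq v₁ v₂ hu1 h12 h2w
    · intro h12'
      have hv1' : kBruhat k' u' (v₁ * u⁻¹ * u') := by
        have := kBruhat_transport hu hu' h' hq u v₁ (Relation.ReflTransGen.refl) hu1 h1w
        rwa [euu] at this
      have hv2' : kBruhat k' (v₂ * u⁻¹ * u') w' := by
        have := kBruhat_transport hu hu' h' hq v₂ w hu2 h2w (Relation.ReflTransGen.refl)
        rwa [eww] at this
      have := kBruhat_transport hu' hu h hq' (v₁ * u⁻¹ * u') (v₂ * u⁻¹ * u')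
        hv1' h12' hv2'
      rwa [eback, eback] at this
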